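/- arXiv:1502.01580 — 2 statements merged into one kernel-verified Lean document; each statement's English description precedes it below -/
import Mathlib

section
/- Let G be a connected finite simple graph with vertex set V(G) = {v_1, …, v_n} and let μ(G) be the Mycielskian of G. Then for all 1 ≤ i < j ≤ n, the distance in μ(G) between v_i and v_j satisfies d_{μ(G)}(v_i, v_j) = min(d_G(v_i, v_j), 4); that is, d_{μ(G)}(v_i, v_j) = d_G(v_i, v_j) whenever d_G(v_i, v_j) ≤ 3, and d_{μ(G)}(v_i, v_j) = 4 whenever d_G(v_i, v_j) ≥ 4. -/
open SimpleGraph Finset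

/-- The Mycielskian of a simple graph `G`. Vertices: `some (Sum.inl a)` are the original
vertices `v_a`, `some (Sum.inr a)` are the copies `x_a`, and `none` is the extra vertex `x`. -/
def mycielskian {V : Type*} (G : SimpleGraph V) : SimpleGraph (Option (V ⊕ V)) where
  Adj u v := match u, v with
    | some (Sum.inl a), some (Sum.inl b) => G.Adj a b
    | some (Sum.inl a), some (Sum.inr b) => G.Adj a b
    | some (Sum.inr a), some (Sum.inl b) => G.Adj a b
    | some (Sum.inr _), none => True
    | none, some (Sum.inr _) => True
    | _, _ => False
  symm := by
    refine ⟨?_⟩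
    rintro (_ | (a | a)) (_ | (b | b)) h <;> first | exact h.symm | exact h
  loopless := by
    refine ⟨?_⟩
    rintro (_ | (a | a)) h
    · exact h
    · exact G.loopless.irrefl a h
    · exact h

instance mycielskian.adjDecidable {V : Type*} (G : SimpleGraph V) [DecidableRel G.Adj] :
    DecidableRel (mycielskian G).Adj := fun u v =>
  match u, v with
  | some (Sum.inl a), some (Sum.inl b) => inferInstanceAs (Decidable (G.Adj a b))
  | some (Sum.inl a), some (Sum.inr b) => inferInstanceAs (Decidable (G.Adj a b))
  | some (Sum.inr a), some (Sum.inl b) => inferInstanceAs (Decidable (G.Adj a b))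
  | some (Sum.inr _), none => inferInstanceAs (Decidable True)
  | none, some (Sum.inr _) => inferInstanceAs (Decidable True)
  | none, none => inferInstanceAs (Decidable False)
  | none, some (Sum.inl _) => inferInstanceAs (Decidable False)
  | some (Sum.inl _), none => inferInstanceAs (Decidable False)
  | some (Sum.inr _), some (Sum.inr _) => inferInstanceAs (Decidable False)

namespace MycAux

variable {V : Type*} (G : SimpleGraph V)

/-- The natural graph homomorphism `G →g mycielskian G`. -/
def inlHom : G →g mycielskian G where
  toFun a := some (Sum.inl a)
  map_rel' h := h

/-- Projection of Mycielskian vertices to `V`, with a default for `none`. -/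
def proj (d : V) : Option (V ⊕ V) → V
  | some (Sum.inl a) => a
  | some (Sum.inr a) => a
  | none => d

lemma adj_proj {d : V} {u v : Option (V ⊕ V)} (h : (mycielskian G).Adj u v)
    (hu : u ≠ none) (hv : v ≠ none) : G.Adj (proj d u) (proj d v) := by
  match u, v with
  | some (Sum.inl a), some (Sum.inl b) => exact h
  | some (Sum.inl a), some (Sum.inr b) => exact h
  | some (Sum.inr a), some (Sum.inl b) => exact h
  | some (Sum.inr a), some (Sum.inr b) => exact h.elim
  | none, _ => exact absurd rfl hu
  | some (Sum.inl _), none => exact absurd rfl hv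
  | some (Sum.inr _), none => exact absurd rfl hv

/-- A walk in the Mycielskian avoiding `none` projects to a walk in `G` of the same length. -/
lemma exists_proj_walk (d : V) {u v : Option (V ⊕ V)} (w : (mycielskian G).Walk u v)
    (hw : none ∉ w.support) : ∃ p : G.Walk (proj d u) (proj d v), p.length = w.length := by
  induction w with
  | nil => exact ⟨SimpleGraph.Walk.nil, rfl⟩
  | @cons a b c h q ih =>
    rw [SimpleGraph.Walk.support_cons, List.mem_cons] at hw
    push_neg at hw
    obtain ⟨p, hp⟩ := ih hw.2
    have hb : b ≠ none := fun hb => hw.2 (hb ▸ q.start_mem_support)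
    exact ⟨SimpleGraph.Walk.cons (adj_proj G h (Ne.symm hw.1) hb) p, by simp [hp]⟩

/-- Any walk from an original vertex to `x` has length at least 2. -/
lemma two_le_length_to_none {a : V} (w : (mycielskian G).Walk (some (Sum.inl a)) none) :
    2 ≤ w.length := by
  by_contra hlt
  push_neg at hlt
  interval_cases h : w.length
  · cases w <;> simp at h
  · exact (SimpleGraph.Walk.adj_of_length_eq_one h).elim

/-- Every vertex of a connected graph with at least two vertices has a neighbor. -/
lemma exists_adj (hG : G.Connected) {a b : V} (hab : a ≠ b) : ∃ c, G.Adj a c := by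
  obtain ⟨w⟩ := hG.preconnected a b
  cases w with
  | nil => exact absurd rfl hab
  | cons h _ => exact ⟨_, h⟩

end MycAux

theorem mycielskian_dist_originals (n : ℕ) (G : SimpleGraph (Fin n)) (hG : G.Connected) :
    ∀ i j : Fin n, i < j →
      (mycielskian G).dist (some (Sum.inl i)) (some (Sum.inl j)) = min (G.dist i j) 4 := by
  classical
  intro i j hij
  have hne : i ≠ j := ne_of_lt hij
  -- a walk of length 4 through x
  obtain ⟨a, ha⟩ := MycAux.exists_adj G hG hne
  obtain ⟨b, hb⟩ := MycAux.exists_adj G hG (Ne.symm hne)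
  let w4 : (mycielskian G).Walk (some (Sum.inl i)) (some (Sum.inl j)) :=
    SimpleGraph.Walk.cons (show (mycielskian G).Adj (some (Sum.inl i)) (some (Sum.inr a)) from ha)
      (SimpleGraph.Walk.cons (show (mycielskian G).Adj (some (Sum.inr a)) none from trivial)
        (SimpleGraph.Walk.cons (show (mycielskian G).Adj none (some (Sum.inr b)) from trivial)
          (SimpleGraph.Walk.cons
            (show (mycielskian G).Adj (some (Sum.inr b)) (some (Sum.inl j)) from hb.symm)
            SimpleGraph.Walk.nil)))
  have hle4 : (mycielskian G).dist (some (Sum.inl i)) (some (Sum.inl j)) ≤ 4 :=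
    SimpleGraph.dist_le w4
  -- upper bound by G.dist via the inl homomorphism
  obtain ⟨p, hp⟩ := (hG.preconnected i j).exists_walk_length_eq_dist
  have hled : (mycielskian G).dist (some (Sum.inl i)) (some (Sum.inl j)) ≤ G.dist i j := by
    have := SimpleGraph.dist_le (p.map (MycAux.inlHom G))
    rwa [SimpleGraph.Walk.length_map, hp] at this
  refine le_antisymm (le_min hled hle4) ?_
  -- lower bound
  have hr : (mycielskian G).Reachable (some (Sum.inl i)) (some (Sum.inl j)) := ⟨w4⟩
  obtain ⟨w, hw⟩ := hr.exists_walk_length_eq_dist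
  rw [← hw]
  rcases em ((none : Option (Fin n ⊕ Fin n)) ∈ w.support) with hnone | hnone
  · refine le_trans (min_le_right _ _) ?_
    have hspec := w.take_spec hnone
    have hlen : (w.takeUntil none hnone).length + (w.dropUntil none hnone).length = w.length := by
      rw [← SimpleGraph.Walk.length_append, hspec]
    have h1 := MycAux.two_le_length_to_none G (w.takeUntil none hnone)
    have h2 := MycAux.two_le_length_to_none G (w.dropUntil none hnone).reverse
    rw [SimpleGraph.Walk.length_reverse] at h2
    omega
  · refine le_trans (min_le_left _ _) ?_
    obtain ⟨p, hp⟩ := MycAux.exists_proj_walk G i w hnone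
    have := SimpleGraph.dist_le p
    rw [hp] at this
    exact this
end

section
/- Let G be a connected finite simple graph with at least two vertices and let μ(G) be the Mycielskian of G. Then μ(G) is connected and its diameter is at most 4, i.e., d_{μ(G)}(u, v) ≤ 4 for all vertices u, v of μ(G). -/
open SimpleGraph Finset

theorem mycielskian_connected_diam_le_four {V : Type*} [Fintype V]
    (hV : 2 ≤ Fintype.card V) (G : SimpleGraph V) (hG : G.Connected) :
    (mycielskian G).Connected ∧
      ∀ u v : Option (V ⊕ V), (mycielskian G).dist u v ≤ 4 := by
  -- every vertex of G has a neighbor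
  have hnbr : ∀ a : V, ∃ b, G.Adj a b := by
    intro a
    obtain ⟨c, hc⟩ := Fintype.exists_ne_of_one_lt_card hV a
    obtain ⟨w⟩ := hG.preconnected a c
    cases w with
    | nil => exact absurd rfl hc.symm
    | cons h p => exact ⟨_, h⟩
  -- every vertex has a walk of length ≤ 2 to `none`
  have hwalk : ∀ u : Option (V ⊕ V),
      ∃ w : (mycielskian G).Walk u none, w.length ≤ 2 := by
    rintro (_ | (a | a))
    · exact ⟨SimpleGraph.Walk.nil, by simp⟩
    · obtain ⟨b, hb⟩ := hnbr a
      refine ⟨SimpleGraph.Walk.cons (show (mycielskian G).Adj (some (Sum.inl a))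
        (some (Sum.inr b)) from hb)
        (SimpleGraph.Walk.cons (show (mycielskian G).Adj (some (Sum.inr b)) none
        from trivial) SimpleGraph.Walk.nil), by simp⟩
    · exact ⟨SimpleGraph.Walk.cons (show (mycielskian G).Adj (some (Sum.inr a)) none
        from trivial) SimpleGraph.Walk.nil, by simp⟩
  constructor
  · refine SimpleGraph.Connected.mk ?_
    intro u v
    obtain ⟨wu, _⟩ := hwalk u
    obtain ⟨wv, _⟩ := hwalk v
    exact ⟨wu.append wv.reverse⟩
  · intro u v
    obtain ⟨wu, hu⟩ := hwalk u
    obtain ⟨wv, hv⟩ := hwalk v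
    calc (mycielskian G).dist u v ≤ (wu.append wv.reverse).length :=
          SimpleGraph.dist_le _
      _ = wu.length + wv.length := by simp
      _ ≤ 4 := by omega
end
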